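/- arXiv:2010.13104 — 2 statements merged into one kernel-verified Lean document; each statement's English description precedes it below -/
import Mathlib

section
/- For Q ∈ ℝ^{n×n} symmetric positive semidefinite, the KKT system [[Q, 𝟙],[𝟙ᵀ, 0]] [c; λ] = [0; 1] always has at least one solution (c, λ). -/
open Matrix

/-- For a real symmetric matrix, any vector orthogonal to the kernel is in the range. -/
lemma symm_mem_range {n : ℕ} (Q : Matrix (Fin n) (Fin n) ℝ) (hs : Qᵀ = Q)
    (b : Fin n → ℝ) (hb : ∀ v, Q *ᵥ v = 0 → b ⬝ᵥ v = 0) : ∃ u, Q *ᵥ u = b := by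
  classical
  set T : EuclideanSpace ℝ (Fin n) →ₗ[ℝ] EuclideanSpace ℝ (Fin n) :=
    Matrix.toEuclideanLin Q with hTdef
  have hQH : Qᴴ = Q := by
    ext i j
    simpa using congrFun (congrFun hs i) j
  have hadj : LinearMap.adjoint T = T := by
    rw [hTdef, ← Matrix.toEuclideanLin_conjTranspose_eq_adjoint, hQH]
  have hTapp : ∀ x : EuclideanSpace ℝ (Fin n),
      T x = (WithLp.equiv 2 (Fin n → ℝ)).symm (Q *ᵥ (WithLp.equiv 2 (Fin n → ℝ)) x) :=
    fun x => Matrix.toEuclideanLin_apply Q x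
  have hle : LinearMap.range T ≤ (LinearMap.ker T)ᗮ := by
    rintro y ⟨x, rfl⟩
    intro v hv
    have hv' : T v = 0 := hv
    calc inner ℝ v (T x) = inner ℝ (LinearMap.adjoint T v) x :=
          (LinearMap.adjoint_inner_left T x v).symm
      _ = inner ℝ (T v) x := by rw [hadj]
      _ = (0 : ℝ) := by rw [hv']; simp
  have hranknull := LinearMap.finrank_range_add_finrank_ker T
  have horth := Submodule.finrank_add_finrank_orthogonal (K := LinearMap.ker T)
  have hdim : Module.finrank ℝ (LinearMap.range T)
      = Module.finrank ℝ (LinearMap.ker T)ᗮ := by omega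
  have heq : LinearMap.range T = (LinearMap.ker T)ᗮ :=
    Submodule.eq_of_le_of_finrank_eq hle hdim
  have hbmem : (WithLp.equiv 2 (Fin n → ℝ)).symm b ∈ (LinearMap.ker T)ᗮ := by
    intro v hv
    have hv' : T v = 0 := hv
    have hQv : Q *ᵥ (WithLp.equiv 2 (Fin n → ℝ)) v = 0 := by
      have := hTapp v
      rw [hv'] at this
      have := congrArg (WithLp.equiv 2 (Fin n → ℝ)) this.symm
      simpa using this
    have hdot : b ⬝ᵥ (WithLp.equiv 2 (Fin n → ℝ)) v = 0 := hb _ hQv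
    have : inner ℝ v ((WithLp.equiv 2 (Fin n → ℝ)).symm b) =
        ∑ i, v i * b i := by
      simp [PiLp.inner_apply, RCLike.inner_apply, mul_comm]
    rw [this]
    rw [dotProduct] at hdot
    rw [← hdot]
    exact Finset.sum_congr rfl fun i _ => mul_comm _ _
  rw [← heq] at hbmem
  obtain ⟨u, hu⟩ := hbmem
  refine ⟨(WithLp.equiv 2 (Fin n → ℝ)) u, ?_⟩
  have := hTapp u
  rw [hu] at this
  have := congrArg (WithLp.equiv 2 (Fin n → ℝ)) this
  simpa using this.symm

theorem kkt_system_solvable (n : ℕ) (hn : 0 < n) (Q : Matrix (Fin n) (Fin n) ℝ)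
    (hQsymm : Qᵀ = Q) (hQpsd : ∀ x : Fin n → ℝ, 0 ≤ x ⬝ᵥ Q *ᵥ x) :
    ∃ (c : Fin n → ℝ) (lam : ℝ),
      Q *ᵥ c + lam • (fun _ => (1:ℝ)) = 0 ∧ (fun _ => (1:ℝ)) ⬝ᵥ c = 1 := by
  have hQH : Qᴴ = Q := by
    ext i j
    simpa using congrFun (congrFun hQsymm i) j
  have hpsd : Q.PosSemidef := Matrix.PosSemidef.of_dotProduct_mulVec_nonneg hQH (fun x => by simpa using hQpsd x)
  by_cases h : ∃ v : Fin n → ℝ, Q *ᵥ v = 0 ∧ (fun _ => (1:ℝ)) ⬝ᵥ v ≠ 0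
  · obtain ⟨v, hv0, hv1⟩ := h
    set s := (fun _ => (1:ℝ)) ⬝ᵥ v with hs
    refine ⟨s⁻¹ • v, 0, ?_, ?_⟩
    · rw [Matrix.mulVec_smul, hv0]
      simp
    · rw [dotProduct_smul, ← hs, smul_eq_mul, inv_mul_cancel₀ hv1]
  · push_neg at h
    have h' : ∀ v, Q *ᵥ v = 0 → (fun _ => (1:ℝ)) ⬝ᵥ v = 0 := h
    obtain ⟨u, hu⟩ := symm_mem_range Q hQsymm (fun _ => (1:ℝ)) h'
    set s := (fun _ => (1:ℝ)) ⬝ᵥ u with hs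
    have hsne : s ≠ 0 := by
      intro hs0
      have hqu : u ⬝ᵥ Q *ᵥ u = 0 := by
        rw [hu]
        rw [hs] at hs0
        rw [dotProduct_comm] at hs0
        exact hs0
      have hQu0 : Q *ᵥ u = 0 := by
        have := (hpsd.dotProduct_mulVec_zero_iff u).mp (by simpa using hqu)
        exact this
      rw [hQu0] at hu
      have := congrFun hu ⟨0, hn⟩
      simp at this
    refine ⟨s⁻¹ • u, -s⁻¹, ?_, ?_⟩
    · rw [Matrix.mulVec_smul, hu]
      ext i
      simp
    · rw [dotProduct_smul, ← hs, smul_eq_mul, inv_mul_cancel₀ hsne]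
end

section
/- Let θₖ > 0 for k = 1,…,N and suppose the neighborhood structure is symmetric (ℓ ∈ 𝒩ₖ ⟺ k ∈ 𝒩_ℓ) with k ∈ 𝒩ₖ. Define A by a_{ℓk} = θ_ℓ / ∑_{m∈𝒩ₖ} θ_m if ℓ ∈ 𝒩ₖ and 0 otherwise, and define p ∈ ℝ^N by pₖ = θₖ ∑_{m∈𝒩ₖ} θ_m / ∑_{ℓ=1}^N (θ_ℓ ∑_{m∈𝒩_ℓ} θ_m). Then Ap = p, pₖ > 0 for all k, and 𝟙ᵀp = 1; i.e., p is a Perron eigenvector of A. -/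
open Matrix

theorem perron_eigenvector_relative_variance (N : ℕ) (hN : 0 < N)
    (𝒩 : Fin N → Finset (Fin N)) (hself : ∀ k, k ∈ 𝒩 k)
    (hsymm : ∀ k l, l ∈ 𝒩 k ↔ k ∈ 𝒩 l)
    (θ : Fin N → ℝ) (hθ : ∀ k, 0 < θ k) :
    let A : Matrix (Fin N) (Fin N) ℝ :=
      fun l k => if l ∈ 𝒩 k then θ l / (∑ m ∈ 𝒩 k, θ m) else 0
    let p : Fin N → ℝ :=
      fun k => θ k * (∑ m ∈ 𝒩 k, θ m) / (∑ l, θ l * ∑ m ∈ 𝒩 l, θ m)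
    A *ᵥ p = p ∧ (∀ k, 0 < p k) ∧ ∑ k, p k = 1 := by
  intro A p
  have hS : ∀ k, 0 < ∑ m ∈ 𝒩 k, θ m := fun k =>
    Finset.sum_pos (fun m _ => hθ m) ⟨k, hself k⟩
  have hZ : 0 < ∑ l, θ l * ∑ m ∈ 𝒩 l, θ m := by
    apply Finset.sum_pos (fun l _ => mul_pos (hθ l) (hS l))
    exact ⟨⟨0, hN⟩, Finset.mem_univ _⟩
  refine ⟨?_, fun k => div_pos (mul_pos (hθ k) (hS k)) hZ, ?_⟩
  · funext l
    show ∑ k, A l k * p k = p l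
    have : ∀ k, A l k * p k =
        (if k ∈ 𝒩 l then θ l * θ k / (∑ l, θ l * ∑ m ∈ 𝒩 l, θ m) else 0) := by
      intro k
      simp only [A, p, hsymm k l]
      split_ifs with h
      · rw [div_mul_div_comm, mul_comm (∑ m ∈ 𝒩 k, θ m), ← mul_assoc,
          mul_div_mul_right _ _ (hS k).ne']
      · simp
    simp only [this]
    rw [Finset.sum_ite_mem, Finset.univ_inter]
    show (∑ k ∈ 𝒩 l, θ l * θ k / _) = p l
    rw [← Finset.sum_div, ← Finset.mul_sum]
  · simp only [p, ← Finset.sum_div]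
    exact div_self hZ.ne'
end
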